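/- Let ϱ = Σᵢ ηᵢ |eᵢ⟩⟨eᵢ| be a full-rank passive state for a Hamiltonian H = Σᵢ Eᵢ |eᵢ⟩⟨eᵢ| (i.e. Eᵢ₊₁ ≥ Eᵢ and 0 < ηᵢ₊₁ ≤ ηᵢ), with H not a scalar multiple of the identity. Then the inverse temperature 1/T = Cov(H, −log ϱ)/Δ²H is nonnegative. -/

import Mathlib

open Matrix

/-- Covariance of two matrices with respect to the maximally mixed state `I/d`. -/
noncomputable def mCov {d : ℕ} (X Y : Matrix (Fin d) (Fin d) ℂ) : ℂ :=
  (X * Y).trace / d - (X.trace / d) * (Y.trace / d)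

/-- Variance of a matrix with respect to the maximally mixed state `I/d`. -/
noncomputable def mVar {d : ℕ} (H : Matrix (Fin d) (Fin d) ℂ) : ℂ :=
  (H * H).trace / d - (H.trace / d) ^ 2


lemma my_exp_conj {d : ℕ} (V : Matrix.unitaryGroup (Fin d) ℂ) (A : Matrix (Fin d) (Fin d) ℂ) :
    NormedSpace.exp ((V : Matrix (Fin d) (Fin d) ℂ) * A * (V : Matrix (Fin d) (Fin d) ℂ)ᴴ)
      = (V : Matrix (Fin d) (Fin d) ℂ) * NormedSpace.exp A * (V : Matrix (Fin d) (Fin d) ℂ)ᴴ := by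
  let u : (Matrix (Fin d) (Fin d) ℂ)ˣ :=
    ⟨V, (V : Matrix (Fin d) (Fin d) ℂ)ᴴ, by simpa [Matrix.star_eq_conjTranspose] using V.2.2,
      by simpa [Matrix.star_eq_conjTranspose] using V.2.1⟩
  have := Matrix.exp_units_conj u A
  simpa [u] using this

lemma my_exp_diag {d : ℕ} (μ : Fin d → ℝ) :
    NormedSpace.exp (Matrix.diagonal (fun j => (μ j : ℂ)))
      = Matrix.diagonal (fun j => ((Real.exp (μ j) : ℝ) : ℂ)) := by
  rw [Matrix.exp_diagonal, Pi.exp_def]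
  funext j
  rw [← Complex.exp_eq_exp_ℂ]
  simp [Complex.ofReal_exp]


/-- For a full-rank passive state `ϱ = Σ ηᵢ|eᵢ⟩⟨eᵢ|` of a Hamiltonian
`H = Σ Eᵢ|eᵢ⟩⟨eᵢ|` (energies nondecreasing, populations positive and nonincreasing,
summing to one), with `H` not a scalar multiple of the identity and `L` the Hermitian
logarithm of `ϱ`, the inverse temperature `Cov(H, -log ϱ)/Δ²H` is nonnegative. -/
theorem passive_state_nonneg_inverse_temperature
    {d : ℕ} (hd : 0 < d)
    (U : Matrix.unitaryGroup (Fin d) ℂ)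
    (E η : Fin d → ℝ)
    (hE : Monotone E) (hη : Antitone η) (hηpos : ∀ i, 0 < η i) (hsum : ∑ i, η i = 1)
    (H ϱ : Matrix (Fin d) (Fin d) ℂ)
    (hHdef : H = (U : Matrix (Fin d) (Fin d) ℂ) * Matrix.diagonal (fun i => (E i : ℂ)) *
      (U : Matrix (Fin d) (Fin d) ℂ)ᴴ)
    (hϱdef : ϱ = (U : Matrix (Fin d) (Fin d) ℂ) * Matrix.diagonal (fun i => (η i : ℂ)) *
      (U : Matrix (Fin d) (Fin d) ℂ)ᴴ)
    (hHne : ¬ ∃ c : ℂ, H = c • (1 : Matrix (Fin d) (Fin d) ℂ))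
    (L : Matrix (Fin d) (Fin d) ℂ) (hL : L.IsHermitian)
    (hexp : NormedSpace.exp L = ϱ) :
    0 ≤ (mCov H (-L) / mVar H).re ∧ (mCov H (-L) / mVar H).im = 0 := by
  set V : Matrix.unitaryGroup (Fin d) ℂ := hL.eigenvectorUnitary with hV
  set μ : Fin d → ℝ := hL.eigenvalues with hμ
  set Um : Matrix (Fin d) (Fin d) ℂ := (U : Matrix (Fin d) (Fin d) ℂ) with hUm
  set Vm : Matrix (Fin d) (Fin d) ℂ := (V : Matrix (Fin d) (Fin d) ℂ) with hVm
  have hUsU : Umᴴ * Um = 1 := by simpa [Matrix.star_eq_conjTranspose] using U.2.1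
  have hUUs : Um * Umᴴ = 1 := by simpa [Matrix.star_eq_conjTranspose] using U.2.2
  have hVsV : Vmᴴ * Vm = 1 := by simpa [Matrix.star_eq_conjTranspose] using V.2.1
  have hVVs : Vm * Vmᴴ = 1 := by simpa [Matrix.star_eq_conjTranspose] using V.2.2
  have hLspec : L = Vm * Matrix.diagonal (fun j => (μ j : ℂ)) * Vmᴴ := by
    have := hL.spectral_theorem
    exact this
  -- exp L in diagonal form
  have hexp2 : Um * Matrix.diagonal (fun i => (η i : ℂ)) * Umᴴ
      = Vm * Matrix.diagonal (fun j => ((Real.exp (μ j) : ℝ) : ℂ)) * Vmᴴ := by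
    rw [← hϱdef, ← hexp, hLspec, my_exp_conj, my_exp_diag]
  -- W := Uᴴ V
  set W : Matrix (Fin d) (Fin d) ℂ := Umᴴ * Vm with hWdef
  have hWWs : W * Wᴴ = 1 := by
    rw [hWdef, Matrix.conjTranspose_mul, Matrix.conjTranspose_conjTranspose,
      Matrix.mul_assoc, ← Matrix.mul_assoc Vm, hVVs, Matrix.one_mul, hUsU]
  have hWsW : Wᴴ * W = 1 := by
    rw [hWdef, Matrix.conjTranspose_mul, Matrix.conjTranspose_conjTranspose,
      Matrix.mul_assoc, ← Matrix.mul_assoc Um, hUUs, Matrix.one_mul, hVsV]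
  -- intertwining
  have hint : Matrix.diagonal (fun i => (η i : ℂ)) * W
      = W * Matrix.diagonal (fun j => ((Real.exp (μ j) : ℝ) : ℂ)) := by
    calc Matrix.diagonal (fun i => (η i : ℂ)) * W
        = Umᴴ * (Um * Matrix.diagonal (fun i => (η i : ℂ)) * Umᴴ) * Vm := by
          rw [hWdef]
          rw [← Matrix.mul_assoc, ← Matrix.mul_assoc, ← Matrix.mul_assoc, hUsU, Matrix.one_mul,
            Matrix.mul_assoc _ Umᴴ Vm]
      _ = Umᴴ * (Vm * Matrix.diagonal (fun j => ((Real.exp (μ j) : ℝ) : ℂ)) * Vmᴴ) * Vm := by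
          rw [hexp2]
      _ = W * Matrix.diagonal (fun j => ((Real.exp (μ j) : ℝ) : ℂ)) := by
          rw [hWdef]
          rw [Matrix.mul_assoc, Matrix.mul_assoc, Matrix.mul_assoc, hVsV,
            Matrix.mul_one, Matrix.mul_assoc]
  have hkey : ∀ i j, W i j ≠ 0 → μ j = Real.log (η i) := by
    intro i j hne
    have h1 : (η i : ℂ) * W i j = W i j * ((Real.exp (μ j) : ℝ) : ℂ) := by
      have := congrFun (congrFun hint i) j
      simpa [Matrix.diagonal_mul, Matrix.mul_diagonal] using this
    have h2 : (η i : ℂ) = ((Real.exp (μ j) : ℝ) : ℂ) := by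
      rw [mul_comm] at h1
      exact mul_left_cancel₀ hne h1
    have h3 : η i = Real.exp (μ j) := by exact_mod_cast h2
    rw [h3, Real.log_exp]
  -- row sums of |W|²
  have hrow : ∀ i, ∑ j, W i j * star (W i j) = 1 := by
    intro i
    have := congrFun (congrFun hWWs i) i
    simpa [Matrix.mul_apply, Matrix.conjTranspose_apply, Matrix.one_apply] using this
  have hcol : ∀ j, ∑ i, W i j * star (W i j) = 1 := by
    intro j
    have := congrFun (congrFun hWsW j) j
    simpa [Matrix.mul_apply, Matrix.conjTranspose_apply, Matrix.one_apply, mul_comm] using this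
  -- traces
  have hUsU' : ∀ X : Matrix (Fin d) (Fin d) ℂ, Umᴴ * (Um * X) = X := fun X => by
    rw [← Matrix.mul_assoc, hUsU, Matrix.one_mul]
  have hUUs' : ∀ X : Matrix (Fin d) (Fin d) ℂ, Um * (Umᴴ * X) = X := fun X => by
    rw [← Matrix.mul_assoc, hUUs, Matrix.one_mul]
  have trH : H.trace = ((∑ i, E i : ℝ) : ℂ) := by
    rw [hHdef, Matrix.trace_mul_cycle, hUsU, Matrix.one_mul, Matrix.trace_diagonal]
    push_cast
    rfl
  have hHHm : H * H = Um * (Matrix.diagonal (fun i => (E i : ℂ) * (E i : ℂ))) * Umᴴ := by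
    rw [hHdef, ← Matrix.diagonal_mul_diagonal]
    simp only [Matrix.mul_assoc, hUsU']
  have trH2 : (H * H).trace = ((∑ i, E i ^ 2 : ℝ) : ℂ) := by
    rw [hHHm, Matrix.trace_mul_cycle, hUsU, Matrix.one_mul, Matrix.trace_diagonal]
    push_cast
    ring
  have hsumμ : ∑ j, (μ j : ℂ) = ∑ i, ((Real.log (η i) : ℝ) : ℂ) := by
    calc ∑ j, (μ j : ℂ) = ∑ j, (μ j : ℂ) * ∑ i, W i j * star (W i j) := by
          refine Finset.sum_congr rfl fun j _ => ?_
          rw [hcol j, mul_one]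
      _ = ∑ j, ∑ i, (μ j : ℂ) * (W i j * star (W i j)) := by
          simp [Finset.mul_sum]
      _ = ∑ i, ∑ j, (μ j : ℂ) * (W i j * star (W i j)) := Finset.sum_comm
      _ = ∑ i, ∑ j, ((Real.log (η i) : ℝ) : ℂ) * (W i j * star (W i j)) := by
          refine Finset.sum_congr rfl fun i _ => Finset.sum_congr rfl fun j _ => ?_
          by_cases h : W i j = 0
          · simp [h]
          · rw [hkey i j h]
      _ = ∑ i, ((Real.log (η i) : ℝ) : ℂ) := by
          refine Finset.sum_congr rfl fun i _ => ?_
          rw [← Finset.mul_sum, hrow i, mul_one]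
  have trL : L.trace = ((∑ i, Real.log (η i) : ℝ) : ℂ) := by
    rw [hLspec, Matrix.trace_mul_cycle, hVsV, Matrix.one_mul, Matrix.trace_diagonal, hsumμ]
    push_cast
    rfl
  have hHLm : H * L = Um * (Matrix.diagonal (fun i => (E i : ℂ)) *
      (W * (Matrix.diagonal (fun j => (μ j : ℂ)) * Wᴴ))) * Umᴴ := by
    rw [hHdef, hLspec, hWdef]
    simp only [Matrix.conjTranspose_mul, Matrix.conjTranspose_conjTranspose,
      Matrix.mul_assoc, hUsU', hUUs', hUUs, Matrix.mul_one]
  have trHL : (H * L).trace = ∑ i, (E i : ℂ) * ∑ j, W i j * ((μ j : ℂ) * star (W i j)) := by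
    rw [hHLm, Matrix.trace_mul_cycle, hUsU, Matrix.one_mul]
    simp [Matrix.trace, Matrix.mul_apply, Matrix.diagonal_apply, Matrix.conjTranspose_apply,
      Finset.mul_sum]
  have trHL2 : (H * L).trace = ((∑ i, E i * Real.log (η i) : ℝ) : ℂ) := by
    rw [trHL]
    have : ∀ i : Fin d, (E i : ℂ) * ∑ j, W i j * ((μ j : ℂ) * star (W i j))
        = (E i : ℂ) * ((Real.log (η i) : ℝ) : ℂ) := by
      intro i
      congr 1
      calc ∑ j, W i j * ((μ j : ℂ) * star (W i j))
          = ∑ j, ((Real.log (η i) : ℝ) : ℂ) * (W i j * star (W i j)) := by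
            refine Finset.sum_congr rfl fun j _ => ?_
            by_cases h : W i j = 0
            · simp [h]
            · rw [hkey i j h]; ring
        _ = ((Real.log (η i) : ℝ) : ℂ) := by rw [← Finset.mul_sum, hrow, mul_one]
    rw [Finset.sum_congr rfl fun i _ => this i]
    push_cast
    rfl
  -- numeric part
  have hd' : (0 : ℝ) < d := by exact_mod_cast hd
  set f : Fin d → ℝ := fun i => -Real.log (η i) with hfdef
  have hf : Monotone f := by
    intro a b hab
    have : Real.log (η b) ≤ Real.log (η a) := Real.log_le_log (hηpos b) (hη hab)
    simpa [hfdef] using neg_le_neg this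
  have cheb : (∑ i, E i) * (∑ i, f i) ≤ d * ∑ i, E i * f i := by
    have := (hE.monovary hf).sum_mul_sum_le_card_mul_sum
    simpa using this
  set c : ℝ := (∑ i, E i * f i) / d - ((∑ i, E i) / d) * ((∑ i, f i) / d) with hcdef
  have hc : 0 ≤ c := by
    rw [hcdef, sub_nonneg, div_mul_div_comm, div_le_div_iff₀ (by positivity) (by positivity)]
    nlinarith [cheb, hd']
  set v : ℝ := (∑ i, E i ^ 2) / d - ((∑ i, E i) / d) ^ 2 with hvdef
  set m : ℝ := (∑ k, E k) / d with hmdef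
  have hm : ∃ i, E i ≠ m := by
    by_contra hcon
    push_neg at hcon
    apply hHne
    refine ⟨((m : ℝ) : ℂ), ?_⟩
    rw [hHdef]
    have h1 : (fun i => (E i : ℂ)) = fun _ : Fin d => ((m : ℝ) : ℂ) := by
      funext i; rw [hcon i]
    rw [h1, ← Matrix.smul_one_eq_diagonal, mul_smul_comm, Matrix.mul_one, smul_mul_assoc, hUUs]
  have hv : 0 < v := by
    obtain ⟨i0, hi0⟩ := hm
    have hS : ∑ k, E k = d * m := by rw [hmdef]; field_simp
    have hexpand : ∑ i, (E i - m) ^ 2 = (∑ i, E i ^ 2) - d * m ^ 2 := by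
      have h2 : ∑ i, (E i - m) ^ 2 = ∑ i, (E i ^ 2 - 2 * m * E i + m ^ 2) :=
        Finset.sum_congr rfl fun i _ => by ring
      rw [h2, Finset.sum_add_distrib, Finset.sum_sub_distrib, Finset.sum_const,
        ← Finset.mul_sum, hS, Finset.card_univ, Fintype.card_fin, nsmul_eq_mul]
      ring
    have hpos : 0 < ∑ i, (E i - m) ^ 2 := by
      refine Finset.sum_pos' (fun i _ => sq_nonneg _) ⟨i0, Finset.mem_univ _, ?_⟩
      exact sq_pos_of_ne_zero (sub_ne_zero.mpr hi0)
    have hveq : v = ((∑ i, E i ^ 2) - d * m ^ 2) / d := by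
      rw [hvdef]
      field_simp
    rw [hveq, ← hexpand]
    exact div_pos hpos hd'
  have hVar : mVar H = ((v : ℝ) : ℂ) := by
    rw [mVar, trH, trH2, hvdef, hmdef]
    push_cast
    ring
  have hc2 : c = -((∑ i, E i * Real.log (η i)) / d)
      + ((∑ i, E i) / d) * ((∑ i, Real.log (η i)) / d) := by
    rw [hcdef, hmdef]
    simp only [hfdef, mul_neg]
    rw [show ∑ i, -(E i * Real.log (η i)) = -∑ i, E i * Real.log (η i) by simp,
      show ∑ i, -Real.log (η i) = -∑ i, Real.log (η i) by simp]
    ring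
  have hCov : mCov H (-L) = ((c : ℝ) : ℂ) := by
    rw [mCov, Matrix.mul_neg, Matrix.trace_neg, Matrix.trace_neg, trHL2, trL, trH, hc2]
    push_cast
    ring
  rw [hCov, hVar, ← Complex.ofReal_div]
  constructor
  · rw [Complex.ofReal_re]
    exact div_nonneg hc hv.le
  · exact Complex.ofReal_im _
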